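/- Let H ∈ (0,1) and let X : [0,∞) × Ω → ℝ be a jointly measurable, centered, square-integrable stochastic process on a probability space (Ω, F, P) with continuous sample paths such that E[X(s)X(t)] = R_H(s,t) for all s, t ≥ 0. Then for every δ > 0 and every t ≥ 0, E[(Δ_δX(t))²] = δ^{2H} Θ(t/δ). -/

import Mathlib

open MeasureTheory Filter Set

/-- Wong–Zakai error process: `Δ_δω(t) = (1/δ)∫_0^t (ω(s+δ) − ω(s)) ds − ω(t)`. -/
noncomputable def WZerr (δ : ℝ) (ω : ℝ → ℝ) (t : ℝ) : ℝ :=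
  (1 / δ) * (∫ s in (0:ℝ)..t, (ω (s + δ) - ω s)) - ω t

/-- The function `Θ(x)` from the paper, for Hurst parameter `H`. -/
noncomputable def Theta (H : ℝ) (x : ℝ) : ℝ :=
  ∫ u in (0:ℝ)..1, ∫ s in (0:ℝ)..1,
    (x ^ (2*H) + 2 * u ^ (2*H) + |s - u + x| ^ (2*H)
      - (u + x) ^ (2*H) - |u - x| ^ (2*H) - |u - s| ^ (2*H))

/-- Covariance function of fractional Brownian motion with Hurst index `H`. -/
noncomputable def fbmCov (H : ℝ) (s t : ℝ) : ℝ :=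
  (s ^ (2*H) + t ^ (2*H) - |t - s| ^ (2*H)) / 2

lemma int_mul_L2 {Ω : Type*} [MeasurableSpace Ω] {P : Measure Ω} {f g : Ω → ℝ}
    (hf : MemLp f 2 P) (hg : MemLp g 2 P) : Integrable (fun ω => f ω * g ω) P := by
  refine Integrable.mono' (hf.integrable_sq.add hg.integrable_sq)
    (hf.aestronglyMeasurable.mul hg.aestronglyMeasurable) ?_
  refine Eventually.of_forall fun ω => ?_
  have h1 := sq_nonneg (|f ω| - |g ω|)
  rw [Real.norm_eq_abs, abs_mul]
  simp only [Pi.add_apply]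
  nlinarith [sq_abs (f ω), sq_abs (g ω), abs_nonneg (f ω), abs_nonneg (g ω)]

lemma WZerr_eq (δ t : ℝ) (hδ : 0 < δ) (ht : 0 ≤ t) (f : ℝ → ℝ)
    (hf : ContinuousOn f (Set.Ici 0)) :
    WZerr δ f t = ∫ v in (0:ℝ)..1, (f (t + δ * v) - f (δ * v) - f t) := by
  have hδ' : δ ≠ 0 := ne_of_gt hδ
  have hii : ∀ a b : ℝ, 0 ≤ a → 0 ≤ b → IntervalIntegrable f volume a b := by
    intro a b ha hb
    refine (hf.mono fun y hy => ?_).intervalIntegrable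
    exact le_trans (le_min ha hb) hy.1
  have hshift : IntervalIntegrable (fun s => f (s + δ)) volume 0 t := by
    refine ((hf.comp ((continuous_id.add continuous_const).continuousOn)
      (fun y hy => ?_)).intervalIntegrable)
    have : (0:ℝ) ≤ y := le_trans (le_min le_rfl ht) hy.1
    simp only [Set.mem_Ici, id_eq, Pi.add_apply]
    linarith
  have e1 : (∫ s in (0:ℝ)..t, (f (s + δ) - f s)) =
      (∫ s in (0:ℝ)..t, f (s + δ)) - ∫ s in (0:ℝ)..t, f s :=
    intervalIntegral.integral_sub hshift (hii 0 t le_rfl ht)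
  have e2 : (∫ s in (0:ℝ)..t, f (s + δ)) = ∫ s in δ..(t+δ), f s := by
    rw [intervalIntegral.integral_comp_add_right f δ, zero_add]
  have A1 : (∫ s in δ..t, f s) + (∫ s in t..(t+δ), f s) = ∫ s in δ..(t+δ), f s :=
    intervalIntegral.integral_add_adjacent_intervals (hii δ t hδ.le ht)
      (hii t (t+δ) ht (by linarith))
  have A2 : (∫ s in (0:ℝ)..δ, f s) + (∫ s in δ..t, f s) = ∫ s in (0:ℝ)..t, f s :=
    intervalIntegral.integral_add_adjacent_intervals (hii 0 δ le_rfl hδ.le) (hii δ t hδ.le ht)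
  have e3 : (∫ s in t..(t+δ), f s) = ∫ r in (0:ℝ)..δ, f (t + r) := by
    rw [intervalIntegral.integral_comp_add_left f t, add_zero]
  have e4 : (∫ v in (0:ℝ)..1, (f (t + δ * v) - f (δ * v) - f t)) =
      δ⁻¹ • ∫ r in (δ*0)..(δ*1), (f (t + r) - f r - f t) :=
    intervalIntegral.integral_comp_mul_left (fun r => f (t + r) - f r - f t) hδ'
  have e5 : (∫ r in (0:ℝ)..δ, (f (t + r) - f r - f t)) =
      (∫ r in (0:ℝ)..δ, f (t + r)) - (∫ r in (0:ℝ)..δ, f r) - δ * f t := by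
    have i1 : IntervalIntegrable (fun r => f (t + r)) volume 0 δ := by
      refine ((hf.comp ((continuous_const.add continuous_id)).continuousOn
        (fun y hy => ?_)).intervalIntegrable)
      have : (0:ℝ) ≤ y := le_trans (le_min le_rfl hδ.le) hy.1
      simp only [Set.mem_Ici, id_eq, Pi.add_apply]
      linarith
    have i2 := hii 0 δ le_rfl hδ.le
    rw [intervalIntegral.integral_sub (i1.sub i2) intervalIntegrable_const,
      intervalIntegral.integral_sub i1 i2, intervalIntegral.integral_const]
    simp
  rw [WZerr, e1, e2, e4, mul_zero, mul_one, e5]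
  have : (∫ s in δ..(t+δ), f s) - (∫ s in (0:ℝ)..t, f s)
      = (∫ r in (0:ℝ)..δ, f (t+r)) - ∫ s in (0:ℝ)..δ, f s := by
    rw [← e3]; linarith
  rw [this]
  rw [smul_eq_mul]
  field_simp

noncomputable def mu01 : Measure ℝ := volume.restrict (Set.Ioc 0 1)

instance : IsProbabilityMeasure mu01 := ⟨by simp [mu01, Real.volume_Ioc]⟩

lemma int01_eq (f : ℝ → ℝ) : (∫ v in (0:ℝ)..1, f v) = ∫ v, f v ∂mu01 := by
  rw [intervalIntegral.integral_of_le zero_le_one]; rfl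

noncomputable def thetaKer (H x s u : ℝ) : ℝ :=
  x ^ (2*H) + 2 * u ^ (2*H) + |s - u + x| ^ (2*H)
    - (u + x) ^ (2*H) - |u - x| ^ (2*H) - |u - s| ^ (2*H)

lemma Theta_eq (H x : ℝ) : Theta H x = ∫ u, (∫ s, thetaKer H x s u ∂mu01) ∂mu01 := by
  have h0 : Theta H x = ∫ u in (0:ℝ)..1, ∫ s in (0:ℝ)..1, thetaKer H x s u := rfl
  rw [h0, int01_eq]
  congr 1
  funext u
  exact int01_eq _

lemma mu01_prod : mu01.prod mu01
    = (volume : Measure (ℝ × ℝ)).restrict ((Set.Ioc (0:ℝ) 1) ×ˢ (Set.Ioc (0:ℝ) 1)) := by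
  unfold mu01
  rw [Measure.prod_restrict, ← Measure.volume_eq_prod]

set_option maxHeartbeats 1000000 in
theorem stmt11 {Ω : Type*} [MeasurableSpace Ω] (P : Measure Ω) [IsProbabilityMeasure P]
    (H : ℝ) (hH : H ∈ Set.Ioo (0:ℝ) 1)
    (X : ℝ → Ω → ℝ)
    (hmeas : Measurable fun p : ℝ × Ω => X p.1 p.2)
    (hcont : ∀ ω, ContinuousOn (fun t => X t ω) (Set.Ici 0))
    (hL2 : ∀ t ≥ (0:ℝ), MemLp (X t) 2 P)
    (hcentered : ∀ t ≥ (0:ℝ), ∫ ω, X t ω ∂P = 0)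
    (hcov : ∀ s ≥ (0:ℝ), ∀ t ≥ (0:ℝ), ∫ ω, X s ω * X t ω ∂P = fbmCov H s t) :
    ∀ δ > (0:ℝ), ∀ t ≥ (0:ℝ),
      ∫ ω, (WZerr δ (fun s => X s ω) t) ^ 2 ∂P = δ ^ (2*H) * Theta H (t / δ) := by
  intro δ hδ t ht
  have hH2 : 0 < 2*H := by linarith [hH.1]
  have hδ' : δ ≠ 0 := ne_of_gt hδ
  set x := t / δ with hxdef
  have hx0 : 0 ≤ x := div_nonneg ht hδ.le
  have hxt : δ * x = t := by rw [hxdef]; field_simp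
  set Z : ℝ → Ω → ℝ := fun v ω => X (t + δ*v) ω - X (δ*v) ω - X t ω with hZ
  clear_value Z
  have hZL2 : ∀ v : ℝ, 0 ≤ v → MemLp (Z v) 2 P := by
    intro v hv
    have h1 : (0:ℝ) ≤ t + δ*v := add_nonneg ht (mul_nonneg hδ.le hv)
    have h2 : (0:ℝ) ≤ δ*v := mul_nonneg hδ.le hv
    rw [hZ]
    exact ((hL2 _ h1).sub (hL2 _ h2)).sub (hL2 _ ht)
  have hZmeas : Measurable (fun q : ℝ × Ω => Z q.1 q.2) := by
    simp only [hZ]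
    apply Measurable.sub
    apply Measurable.sub
    · exact hmeas.comp (((measurable_fst.const_mul δ).const_add t).prodMk measurable_snd)
    · exact hmeas.comp ((measurable_fst.const_mul δ).prodMk measurable_snd)
    · exact hmeas.comp (measurable_const.prodMk measurable_snd)
  have hXmul : ∀ a, 0 ≤ a → ∀ b, 0 ≤ b → Integrable (fun ω => X a ω * X b ω) P :=
    fun a ha b hb => int_mul_L2 (hL2 a ha) (hL2 b hb)
  have hcovself : ∀ a : ℝ, fbmCov H a a = a ^ (2*H) := by
    intro a
    simp only [fbmCov, sub_self, abs_zero, Real.zero_rpow hH2.ne']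
    ring
  have hXsq : ∀ a, 0 ≤ a → ∫ ω, (X a ω)^2 ∂P = a^(2*H) := by
    intro a ha
    simp only [pow_two]
    rw [hcov a ha a ha, hcovself]
  have hZsqbound : ∀ v, 0 ≤ v → v ≤ 1 → ∫ ω, (Z v ω)^2 ∂P ≤ 9 * (t+δ)^(2*H) := by
    intro v h0 h1
    have ha : (0:ℝ) ≤ t + δ*v := add_nonneg ht (mul_nonneg hδ.le h0)
    have hb : (0:ℝ) ≤ δ*v := mul_nonneg hδ.le h0
    have iA := (hL2 _ ha).integrable_sq
    have iB := (hL2 _ hb).integrable_sq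
    have iC := (hL2 _ ht).integrable_sq
    have iZ := (hZL2 v h0).integrable_sq
    have iRHS : Integrable (fun ω => 3*((X (t+δ*v) ω)^2 + (X (δ*v) ω)^2 + (X t ω)^2)) P := by
      exact ((iA.add iB).add iC).const_mul 3
    have hmono : ∫ ω, (Z v ω)^2 ∂P
        ≤ ∫ ω, 3*((X (t+δ*v) ω)^2 + (X (δ*v) ω)^2 + (X t ω)^2) ∂P := by
      refine integral_mono iZ iRHS fun ω => ?_
      simp only [hZ]
      nlinarith [sq_nonneg (X (t+δ*v) ω + X (δ*v) ω), sq_nonneg (X (t+δ*v) ω + X t ω),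
        sq_nonneg (X (δ*v) ω - X t ω)]
    have hsplit : ∫ ω, 3*((X (t+δ*v) ω)^2 + (X (δ*v) ω)^2 + (X t ω)^2) ∂P
        = 3*((t+δ*v)^(2*H) + (δ*v)^(2*H) + t^(2*H)) := by
      have iAB : Integrable (fun ω => (X (t+δ*v) ω)^2 + (X (δ*v) ω)^2) P := iA.add iB
      rw [integral_const_mul, integral_add iAB iC, integral_add iA iB,
        hXsq _ ha, hXsq _ hb, hXsq _ ht]
    have hbd : ∀ c : ℝ, 0 ≤ c → c ≤ t + δ → c^(2*H) ≤ (t+δ)^(2*H) :=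
      fun c hc hc' => Real.rpow_le_rpow hc hc' hH2.le
    have b1 := hbd (t+δ*v) ha (by nlinarith)
    have b2 := hbd (δ*v) hb (by nlinarith)
    have b3 := hbd t ht (by linarith)
    linarith [hmono, hsplit.le, hsplit.ge]
  have hE : ∀ s, 0 ≤ s → ∀ u, 0 ≤ u → ∫ ω, Z s ω * Z u ω ∂P
      = δ^(2*H) * ((thetaKer H x s u + thetaKer H x u s)/2) := by
    intro s hs u hu
    have has : (0:ℝ) ≤ t + δ*s := add_nonneg ht (mul_nonneg hδ.le hs)
    have hbs : (0:ℝ) ≤ δ*s := mul_nonneg hδ.le hs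
    have hau : (0:ℝ) ≤ t + δ*u := add_nonneg ht (mul_nonneg hδ.le hu)
    have hbu : (0:ℝ) ≤ δ*u := mul_nonneg hδ.le hu
    have i1 : Integrable (fun ω => X (t + δ*s) ω * X (t + δ*u) ω) P := hXmul _ has _ hau
    have i2 : Integrable (fun ω => X (t + δ*s) ω * X (δ*u) ω) P := hXmul _ has _ hbu
    have i3 : Integrable (fun ω => X (t + δ*s) ω * X t ω) P := hXmul _ has _ ht
    have i4 : Integrable (fun ω => X (δ*s) ω * X (t + δ*u) ω) P := hXmul _ hbs _ hau
    have i5 : Integrable (fun ω => X (δ*s) ω * X (δ*u) ω) P := hXmul _ hbs _ hbu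
    have i6 : Integrable (fun ω => X (δ*s) ω * X t ω) P := hXmul _ hbs _ ht
    have i7 : Integrable (fun ω => X t ω * X (t + δ*u) ω) P := hXmul _ ht _ hau
    have i8 : Integrable (fun ω => X t ω * X (δ*u) ω) P := hXmul _ ht _ hbu
    have i9 : Integrable (fun ω => X t ω * X t ω) P := hXmul _ ht _ ht
    have pre2 : Integrable (fun ω => (X (t + δ*s) ω * X (t + δ*u) ω - X (t + δ*s) ω * X (δ*u) ω)) P := i1.sub i2
    have pre3 : Integrable (fun ω => ((X (t + δ*s) ω * X (t + δ*u) ω - X (t + δ*s) ω * X (δ*u) ω) - X (t + δ*s) ω * X t ω)) P := pre2.sub i3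
    have pre4 : Integrable (fun ω => (((X (t + δ*s) ω * X (t + δ*u) ω - X (t + δ*s) ω * X (δ*u) ω) - X (t + δ*s) ω * X t ω) - X (δ*s) ω * X (t + δ*u) ω)) P := pre3.sub i4
    have pre5 : Integrable (fun ω => ((((X (t + δ*s) ω * X (t + δ*u) ω - X (t + δ*s) ω * X (δ*u) ω) - X (t + δ*s) ω * X t ω) - X (δ*s) ω * X (t + δ*u) ω) + X (δ*s) ω * X (δ*u) ω)) P := pre4.add i5
    have pre6 : Integrable (fun ω => (((((X (t + δ*s) ω * X (t + δ*u) ω - X (t + δ*s) ω * X (δ*u) ω) - X (t + δ*s) ω * X t ω) - X (δ*s) ω * X (t + δ*u) ω) + X (δ*s) ω * X (δ*u) ω) + X (δ*s) ω * X t ω)) P := pre5.add i6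
    have pre7 : Integrable (fun ω => ((((((X (t + δ*s) ω * X (t + δ*u) ω - X (t + δ*s) ω * X (δ*u) ω) - X (t + δ*s) ω * X t ω) - X (δ*s) ω * X (t + δ*u) ω) + X (δ*s) ω * X (δ*u) ω) + X (δ*s) ω * X t ω) - X t ω * X (t + δ*u) ω)) P := pre6.sub i7
    have pre8 : Integrable (fun ω => (((((((X (t + δ*s) ω * X (t + δ*u) ω - X (t + δ*s) ω * X (δ*u) ω) - X (t + δ*s) ω * X t ω) - X (δ*s) ω * X (t + δ*u) ω) + X (δ*s) ω * X (δ*u) ω) + X (δ*s) ω * X t ω) - X t ω * X (t + δ*u) ω) + X t ω * X (δ*u) ω)) P := pre7.add i8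
    have hfun : (fun ω => Z s ω * Z u ω) = (fun ω => X (t + δ*s) ω * X (t + δ*u) ω - X (t + δ*s) ω * X (δ*u) ω - X (t + δ*s) ω * X t ω - X (δ*s) ω * X (t + δ*u) ω + X (δ*s) ω * X (δ*u) ω + X (δ*s) ω * X t ω - X t ω * X (t + δ*u) ω + X t ω * X (δ*u) ω + X t ω * X t ω) := by
      funext ω; simp only [hZ]; ring
    have step1 : ∫ ω, Z s ω * Z u ω ∂P = fbmCov H (t + δ*s) (t + δ*u) - fbmCov H (t + δ*s) (δ*u) - fbmCov H (t + δ*s) t - fbmCov H (δ*s) (t + δ*u) + fbmCov H (δ*s) (δ*u) + fbmCov H (δ*s) t - fbmCov H t (t + δ*u) + fbmCov H t (δ*u) + fbmCov H t t := by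
      rw [hfun, integral_add pre8 i9, integral_add pre7 i8, integral_sub pre6 i7,
          integral_add pre5 i6, integral_add pre4 i5, integral_sub pre3 i4,
          integral_sub pre2 i3, integral_sub i1 i2,
          hcov _ has _ hau, hcov _ has _ hbu, hcov _ has _ ht, hcov _ hbs _ hau,
          hcov _ hbs _ hbu, hcov _ hbs _ ht, hcov _ ht _ hau, hcov _ ht _ hbu, hcov _ ht _ ht]

    have hD : ∀ c:ℝ, 0 ≤ c → (δ*c)^(2*H) = δ^(2*H) * c^(2*H) :=
      fun c hc => Real.mul_rpow hδ.le hc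
    have hDa : ∀ c:ℝ, |δ*c|^(2*H) = δ^(2*H) * |c|^(2*H) := by
      intro c; rw [abs_mul, abs_of_pos hδ, Real.mul_rpow hδ.le (abs_nonneg c)]
    have hsx : (0:ℝ) ≤ s + x := add_nonneg hs hx0
    have hux : (0:ℝ) ≤ u + x := add_nonneg hu hx0
    have c11 : fbmCov H (t + δ*s) (t + δ*u)
        = δ^(2*H) * (((s+x)^(2*H) + (u+x)^(2*H) - |u-s|^(2*H))/2) := by
      simp only [fbmCov]
      rw [show t + δ*u - (t + δ*s) = δ*(u - s) by ring, hDa,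
          show t + δ*s = δ*(s+x) by rw [← hxt]; ring,
          show t + δ*u = δ*(u+x) by rw [← hxt]; ring,
          hD _ hsx, hD _ hux]
      ring
    have c12 : fbmCov H (t + δ*s) (δ*u)
        = δ^(2*H) * (((s+x)^(2*H) + u^(2*H) - |s-u+x|^(2*H))/2) := by
      simp only [fbmCov]
      rw [show δ*u - (t + δ*s) = δ*(-(s-u+x)) by rw [← hxt]; ring, hDa, abs_neg,
          show t + δ*s = δ*(s+x) by rw [← hxt]; ring, hD _ hsx, hD _ hu]
      ring
    have c13 : fbmCov H (t + δ*s) t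
        = δ^(2*H) * (((s+x)^(2*H) + x^(2*H) - s^(2*H))/2) := by
      simp only [fbmCov]
      rw [show t - (t + δ*s) = δ*(-s) by ring, hDa, abs_neg, abs_of_nonneg hs,
          show t + δ*s = δ*(s+x) by rw [← hxt]; ring, hD _ hsx, ← hxt, hD _ hx0]
      ring
    have c14 : fbmCov H (δ*s) (t + δ*u)
        = δ^(2*H) * ((s^(2*H) + (u+x)^(2*H) - |u-s+x|^(2*H))/2) := by
      simp only [fbmCov]
      rw [show t + δ*u - δ*s = δ*(u-s+x) by rw [← hxt]; ring, hDa,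
          show t + δ*u = δ*(u+x) by rw [← hxt]; ring, hD _ hux, hD _ hs]
      ring
    have c15 : fbmCov H (δ*s) (δ*u)
        = δ^(2*H) * ((s^(2*H) + u^(2*H) - |u-s|^(2*H))/2) := by
      simp only [fbmCov]
      rw [show δ*u - δ*s = δ*(u-s) by ring, hDa, hD _ hs, hD _ hu]
      ring
    have c16 : fbmCov H (δ*s) t
        = δ^(2*H) * ((s^(2*H) + x^(2*H) - |s-x|^(2*H))/2) := by
      simp only [fbmCov]
      rw [show t - δ*s = δ*(-(s-x)) by rw [← hxt]; ring, hDa, abs_neg, hD _ hs,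
          ← hxt, hD _ hx0]
      ring
    have c17 : fbmCov H t (t + δ*u)
        = δ^(2*H) * ((x^(2*H) + (u+x)^(2*H) - u^(2*H))/2) := by
      simp only [fbmCov]
      rw [show t + δ*u - t = δ*u by ring, hDa, abs_of_nonneg hu,
          show t + δ*u = δ*(u+x) by rw [← hxt]; ring, hD _ hux, ← hxt, hD _ hx0]
      ring
    have c18 : fbmCov H t (δ*u)
        = δ^(2*H) * ((x^(2*H) + u^(2*H) - |u-x|^(2*H))/2) := by
      simp only [fbmCov]
      rw [show δ*u - t = δ*(u-x) by rw [← hxt]; ring, hDa, hD _ hu, ← hxt, hD _ hx0]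
      ring
    have c19 : fbmCov H t t = δ^(2*H) * (x^(2*H)) := by
      rw [hcovself, ← hxt, hD _ hx0]
    rw [step1, c11, c12, c13, c14, c15, c16, c17, c18, c19]
    simp only [thetaKer]
    rw [abs_sub_comm s u]
    ring
  have hprod_meas : Measurable (fun q : (ℝ×ℝ) × Ω => Z q.1.1 q.2 * Z q.1.2 q.2) :=
    (hZmeas.comp ((measurable_fst.fst).prodMk measurable_snd)).mul
      (hZmeas.comp ((measurable_fst.snd).prodMk measurable_snd))
  have haeIoc : ∀ᵐ p : ℝ×ℝ ∂(mu01.prod mu01),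
      p ∈ (Set.Ioc (0:ℝ) 1) ×ˢ (Set.Ioc (0:ℝ) 1) := by
    rw [mu01_prod]
    exact ae_restrict_mem (measurableSet_Ioc.prod measurableSet_Ioc)
  have hbig : Integrable (fun q : (ℝ×ℝ) × Ω => Z q.1.1 q.2 * Z q.1.2 q.2)
      ((mu01.prod mu01).prod P) := by
    rw [integrable_prod_iff hprod_meas.aestronglyMeasurable]
    constructor
    · filter_upwards [haeIoc] with p hp
      exact int_mul_L2 (hZL2 _ hp.1.1.le) (hZL2 _ hp.2.1.le)
    · refine Integrable.mono' (integrable_const (9 * (t+δ)^(2*H)))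
        (hprod_meas.aestronglyMeasurable.norm.integral_prod_right') ?_
      filter_upwards [haeIoc] with p hp
      have hs0 : (0:ℝ) ≤ p.1 := hp.1.1.le
      have hu0 : (0:ℝ) ≤ p.2 := hp.2.1.le
      have imul := int_mul_L2 (hZL2 _ hs0) (hZL2 _ hu0)
      have iq1 := (hZL2 _ hs0).integrable_sq
      have iq2 := (hZL2 _ hu0).integrable_sq
      have key : ∫ ω, ‖Z p.1 ω * Z p.2 ω‖ ∂P ≤ 9*(t+δ)^(2*H) := by
        have step : ∫ ω, ‖Z p.1 ω * Z p.2 ω‖ ∂P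
            ≤ ∫ ω, ((Z p.1 ω)^2 + (Z p.2 ω)^2)/2 ∂P := by
          refine integral_mono imul.norm ((iq1.add iq2).div_const 2) fun ω => ?_
          rw [Real.norm_eq_abs, abs_mul]
          simp only [Pi.add_apply]
          nlinarith [sq_nonneg (|Z p.1 ω| - |Z p.2 ω|), sq_abs (Z p.1 ω), sq_abs (Z p.2 ω),
            abs_nonneg (Z p.1 ω), abs_nonneg (Z p.2 ω)]
        have split : ∫ ω, ((Z p.1 ω)^2 + (Z p.2 ω)^2)/2 ∂P
            = ((∫ ω, (Z p.1 ω)^2 ∂P) + ∫ ω, (Z p.2 ω)^2 ∂P)/2 := by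
          rw [integral_div, integral_add iq1 iq2]
        have b1 := hZsqbound p.1 hs0 hp.1.2
        have b2 := hZsqbound p.2 hu0 hp.2.2
        linarith [step, split.le, split.ge]
      have hnn : 0 ≤ ∫ ω, ‖Z p.1 ω * Z p.2 ω‖ ∂P := integral_nonneg fun ω => norm_nonneg _
      rw [Real.norm_eq_abs, abs_of_nonneg hnn]
      exact key
  have hrpow_cont : Continuous (fun y : ℝ => y ^ (2*H)) :=
    continuous_iff_continuousAt.mpr fun y =>
      Real.continuousAt_rpow_const y _ (Or.inr hH2.le)
  have habs_cont : Continuous (fun y : ℝ => |y| ^ (2*H)) := hrpow_cont.comp continuous_abs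
  have hker_cont : Continuous (fun p : ℝ×ℝ => thetaKer H x p.1 p.2) := by
    simp only [thetaKer]
    exact ((((continuous_const.add
        (continuous_const.mul (hrpow_cont.comp continuous_snd))).add
        (habs_cont.comp ((continuous_fst.sub continuous_snd).add continuous_const))).sub
        (hrpow_cont.comp (continuous_snd.add continuous_const))).sub
        (habs_cont.comp (continuous_snd.sub continuous_const))).sub
        (habs_cont.comp (continuous_snd.sub continuous_fst))
  have hker_cont2 : Continuous (fun p : ℝ×ℝ => thetaKer H x p.2 p.1) :=
    hker_cont.comp continuous_swap
  have hkerInt : Integrable (fun p : ℝ×ℝ => thetaKer H x p.1 p.2) (mu01.prod mu01) := by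
    rw [mu01_prod]
    exact (hker_cont.continuousOn.integrableOn_compact
      (isCompact_Icc.prod isCompact_Icc)).mono_set
      (Set.prod_mono Set.Ioc_subset_Icc_self Set.Ioc_subset_Icc_self)
  have hkerInt2 : Integrable (fun p : ℝ×ℝ => thetaKer H x p.2 p.1) (mu01.prod mu01) := by
    rw [mu01_prod]
    exact (hker_cont2.continuousOn.integrableOn_compact
      (isCompact_Icc.prod isCompact_Icc)).mono_set
      (Set.prod_mono Set.Ioc_subset_Icc_self Set.Ioc_subset_Icc_self)
  have hswap : ∫ p, thetaKer H x p.1 p.2 ∂(mu01.prod mu01)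
      = ∫ p, thetaKer H x p.2 p.1 ∂(mu01.prod mu01) := by
    have h := MeasureTheory.integral_prod_swap (μ := mu01) (ν := mu01)
      (f := fun p : ℝ×ℝ => thetaKer H x p.2 p.1)
    simpa using h
  calc ∫ ω, (WZerr δ (fun s => X s ω) t)^2 ∂P
      = ∫ ω, ∫ p, Z p.1 ω * Z p.2 ω ∂(mu01.prod mu01) ∂P := by
        refine integral_congr_ae (Eventually.of_forall fun ω => ?_)
        beta_reduce
        simp only [hZ]
        rw [WZerr_eq δ t hδ ht _ (hcont ω), int01_eq, sq]
        exact (MeasureTheory.integral_prod_mul (μ := mu01) (ν := mu01)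
          (fun v => X (t + δ*v) ω - X (δ*v) ω - X t ω)
          (fun v => X (t + δ*v) ω - X (δ*v) ω - X t ω)).symm
    _ = ∫ p, (∫ ω, Z p.1 ω * Z p.2 ω ∂P) ∂(mu01.prod mu01) :=
        (MeasureTheory.integral_integral_swap
          (f := fun (p : ℝ×ℝ) (ω : Ω) => Z p.1 ω * Z p.2 ω) hbig).symm
    _ = ∫ p, δ^(2*H) * ((thetaKer H x p.1 p.2 + thetaKer H x p.2 p.1)/2)
          ∂(mu01.prod mu01) := by
        refine integral_congr_ae ?_
        filter_upwards [haeIoc] with p hp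
        exact hE p.1 hp.1.1.le p.2 hp.2.1.le
    _ = δ^(2*H) * (((∫ p, thetaKer H x p.1 p.2 ∂(mu01.prod mu01))
          + ∫ p, thetaKer H x p.2 p.1 ∂(mu01.prod mu01))/2) := by
        rw [integral_const_mul, integral_div, integral_add hkerInt hkerInt2]
    _ = δ^(2*H) * ∫ p, thetaKer H x p.2 p.1 ∂(mu01.prod mu01) := by
        rw [hswap]; ring
    _ = δ^(2*H) * Theta H x := by
        rw [Theta_eq, MeasureTheory.integral_prod _ hkerInt2]
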